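/- Theorem 3.2(ii) (Q-based asymptotic regularity): Assume 2ν > β. Let (x_k) be a sequence in H satisfying the G-FBS iteration Q x_k − B x_k − Q x_{k+1} ∈ A x_{k+1} for every k ∈ ℕ, and suppose there exists x⋆ ∈ H with −B x⋆ ∈ A x⋆. Then Q(x_k − x_{k+1}) converges strongly to 0 in H as k → ∞. -/

import Mathlib

open RealInnerProductSpace
set_option maxHeartbeats 1000000

lemma psd_cauchy_schwarz
    {H : Type*} [NormedAddCommGroup H] [InnerProductSpace ℝ H]
    (Q : H →L[ℝ] H)
    (hQsym : ∀ x y : H, ⟪Q x, y⟫ = ⟪x, Q y⟫)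
    (hQpos : ∀ x : H, 0 ≤ ⟪Q x, x⟫)
    (v w : H) : ⟪Q v, w⟫ ^ 2 ≤ ⟪Q v, v⟫ * ⟪Q w, w⟫ := by
  have h : ∀ t : ℝ, 0 ≤ ⟪Q w, w⟫ * (t * t) + (2 * ⟪Q v, w⟫) * t + ⟪Q v, v⟫ := by
    intro t
    have h0 := hQpos (v + t • w)
    have hsymvw : ⟪Q w, v⟫ = ⟪Q v, w⟫ := by
      rw [hQsym w v, real_inner_comm]
    simp only [map_add, map_smul, inner_add_left, inner_add_right,
      inner_smul_left, inner_smul_right, RCLike.star_def, starRingEnd_apply,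
      star_trivial] at h0
    rw [hsymvw] at h0
    nlinarith [h0]
  have hd := discrim_le_zero h
  rw [discrim] at hd
  nlinarith [hd]

lemma psd_coercive
    {H : Type*} [NormedAddCommGroup H] [InnerProductSpace ℝ H] [CompleteSpace H]
    (Q : H →L[ℝ] H)
    (hQsym : ∀ x y : H, ⟪Q x, y⟫ = ⟪x, Q y⟫)
    (hQpos : ∀ x : H, 0 ≤ ⟪Q x, x⟫)
    (ν : ℝ) (hν : 0 < ν)
    (hνQ : ∀ w ∈ (LinearMap.ker (Q : H →ₗ[ℝ] H))ᗮ, ν * ‖w‖ ≤ ‖Q w‖) :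
    ∀ w ∈ (LinearMap.ker (Q : H →ₗ[ℝ] H))ᗮ, ν * ‖w‖ ^ 2 ≤ ⟪Q w, w⟫ := by
  set K : Submodule ℝ H := (LinearMap.ker (Q : H →ₗ[ℝ] H))ᗮ with hK
  haveI : CompleteSpace (LinearMap.ker (Q : H →ₗ[ℝ] H)) :=
    (ContinuousLinearMap.isClosed_ker Q).completeSpace_coe
  haveI : CompleteSpace K := (Submodule.isClosed_orthogonal _).completeSpace_coe
  -- Q maps into K
  have hQK : ∀ u : H, Q u ∈ K := by
    intro u
    rw [hK, Submodule.mem_orthogonal]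
    intro z hz
    have hz0 : Q z = 0 := hz
    rw [real_inner_comm, hQsym, hz0, inner_zero_right]
  -- the restriction of Q to K
  set f : K →L[ℝ] H := Q.comp (Submodule.subtypeL K) with hf
  have hanti : AntilipschitzWith (ν.toNNReal)⁻¹ f := by
    apply ContinuousLinearMap.antilipschitz_of_bound
    intro z
    have := hνQ (z : H) z.2
    rw [NNReal.coe_inv, Real.coe_toNNReal _ hν.le]
    rw [inv_mul_eq_div, le_div_iff₀ hν, mul_comm]
    exact this
  have hclosed : IsClosed (Set.range f) := hanti.isClosed_range f.uniformContinuous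
  -- density: K ⊆ closure of range Q
  have hdense : (K : Set H) ⊆ closure (Set.range f) := by
    have h1 : (LinearMap.range (Q : H →ₗ[ℝ] H))ᗮ ≤ LinearMap.ker (Q : H →ₗ[ℝ] H) := by
      intro u hu
      rw [Submodule.mem_orthogonal] at hu
      have h2 : ∀ x' : H, ⟪x', Q u⟫ = 0 := by
        intro x'
        have := hu (Q x') (LinearMap.mem_range_self _ x')
        rwa [hQsym] at this
      have := h2 (Q u)
      exact inner_self_eq_zero.mp this
    have h3 : K ≤ (LinearMap.range (Q : H →ₗ[ℝ] H))ᗮᗮ := Submodule.orthogonal_le h1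
    rw [Submodule.orthogonal_orthogonal_eq_closure] at h3
    have h4 : (LinearMap.range (Q : H →ₗ[ℝ] H) : Set H) ⊆ Set.range f := by
      rintro _ ⟨u, rfl⟩
      refine ⟨⟨u - (Submodule.orthogonalProjection (LinearMap.ker (Q : H →ₗ[ℝ] H)) u : H),
        Submodule.sub_starProjection_mem_orthogonal u⟩, ?_⟩
      have hker : Q ((Submodule.orthogonalProjection (LinearMap.ker (Q : H →ₗ[ℝ] H)) u : H)) = 0 :=
        (Submodule.orthogonalProjection (LinearMap.ker (Q : H →ₗ[ℝ] H)) u).2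
      simp [hf, map_sub, hker]
      exact hker
    intro y hy
    exact closure_mono h4 (h3 hy)
  have hsurj : ∀ y : H, y ∈ K → ∃ v : H, v ∈ K ∧ Q v = y := by
    intro y hy
    have : y ∈ Set.range f := hclosed.closure_subset (hdense hy)
    obtain ⟨v, hv⟩ := this
    exact ⟨(v : H), v.2, hv⟩
  -- the coercivity estimate
  intro w hw
  rcases eq_or_ne w 0 with rfl | hw0
  · simp
  obtain ⟨v, hvK, hQv⟩ := hsurj w hw
  have hcs := psd_cauchy_schwarz Q hQsym hQpos v w
  have h5 : ⟪Q v, w⟫ = ‖w‖ ^ 2 := by rw [hQv, real_inner_self_eq_norm_sq]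
  rw [h5] at hcs
  have hQvv : ⟪Q v, v⟫ ≤ ‖w‖ * ‖v‖ := by
    calc ⟪Q v, v⟫ ≤ ‖Q v‖ * ‖v‖ := real_inner_le_norm _ _
    _ = ‖w‖ * ‖v‖ := by rw [hQv]
  have hνv : ν * ‖v‖ ≤ ‖w‖ := by
    have := hνQ v hvK
    rwa [hQv] at this
  have hwpos : 0 < ‖w‖ := norm_pos_iff.mpr hw0
  have hQww := hQpos w
  have hQvv0 := hQpos v
  have hA2 : ν * ⟪Q v, v⟫ ≤ ‖w‖ ^ 2 := by
    nlinarith [hQvv, hνv, norm_nonneg v, norm_nonneg w]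
  have h6 : ν * ((‖w‖ ^ 2) ^ 2) ≤ ν * (⟪Q v, v⟫ * ⟪Q w, w⟫) :=
    mul_le_mul_of_nonneg_left hcs hν.le
  have h8 : (ν * ⟪Q v, v⟫) * ⟪Q w, w⟫ ≤ ‖w‖ ^ 2 * ⟪Q w, w⟫ :=
    mul_le_mul_of_nonneg_right hA2 hQww
  nlinarith [h6, h8, mul_pos hwpos hwpos, hwpos]

/-- Theorem 3.2(ii): `Q`-based asymptotic regularity of the G-FBS iteration. -/
theorem stmt_10
    {H : Type*} [NormedAddCommGroup H] [InnerProductSpace ℝ H] [CompleteSpace H]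
    (Q : H →L[ℝ] H)
    (hQsym : ∀ x y : H, ⟪Q x, y⟫ = ⟪x, Q y⟫)
    (hQpos : ∀ x : H, 0 ≤ ⟪Q x, x⟫)
    (ν : ℝ) (hν : 0 < ν)
    (hνQ : ∀ w ∈ (LinearMap.ker (Q : H →ₗ[ℝ] H))ᗮ, ν * ‖w‖ ≤ ‖Q w‖)
    (β : ℝ) (hβ : 0 ≤ β)
    (hνβ : β < 2 * ν)
    (B : H → H)
    (hB : ∀ x y : H, ‖B x - B y‖ ^ 2 ≤ β * ⟪B x - B y, x - y⟫)
    (hranB : Set.range B ⊆ Set.range Q)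
    (A : H → Set H)
    (hA : ∀ x y u v : H, u ∈ A x → v ∈ A y → 0 ≤ ⟪u - v, x - y⟫)
    (x : ℕ → H)
    (hiter : ∀ k : ℕ, Q (x k) - B (x k) - Q (x (k + 1)) ∈ A (x (k + 1)))
    (xs : H) (hxs : -B xs ∈ A xs) :
    Filter.Tendsto (fun k : ℕ => Q (x k - x (k + 1))) Filter.atTop (nhds 0) := by
  have hcoer := psd_coercive Q hQsym hQpos ν hν hνQ
  haveI : CompleteSpace (LinearMap.ker (Q : H →ₗ[ℝ] H)) :=
    (ContinuousLinearMap.isClosed_ker Q).completeSpace_coe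
  set K : Submodule ℝ H := (LinearMap.ker (Q : H →ₗ[ℝ] H))ᗮ with hKdef
  -- notation
  set d : ℕ → H := fun k => x k - x (k + 1) with hd
  set e : ℕ → H := fun k => x k - xs with he
  set b : ℕ → H := fun k => B (x k) - B xs with hb
  set w : ℕ → H := fun k => (Submodule.orthogonalProjection K (d k) : H) with hw
  set p : ℕ → H := fun k => d k - w k with hp
  set V : ℕ → ℝ := fun k => ⟪Q (e k), e k⟫ with hV
  have hwK : ∀ k, w k ∈ K := fun k => (Submodule.orthogonalProjection K (d k)).2
  have hdk : ∀ k, d k = w k + p k := by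
    intro k
    show d k = w k + (d k - w k)
    abel
  have hpker : ∀ k, Q (p k) = 0 := by
    intro k
    have h1 : p k ∈ Kᗮ := Submodule.sub_starProjection_mem_orthogonal (K := K) (d k)
    rw [hKdef, Submodule.orthogonal_orthogonal] at h1
    exact h1
  have hQdw : ∀ k, Q (d k) = Q (w k) := by
    intro k
    rw [hdk k, map_add, hpker, add_zero]
  -- b k is in the range of Q
  have hbQ : ∀ k, ∃ z : H, Q z = b k := by
    intro k
    obtain ⟨u, hu⟩ := hranB (Set.mem_range_self (x k))
    obtain ⟨u', hu'⟩ := hranB (Set.mem_range_self xs)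
    exact ⟨u - u', by rw [map_sub, hu, hu']⟩
  -- inner products with p k vanish
  have hip : ∀ k, ⟪Q (w k), p k⟫ = 0 := by
    intro k
    rw [hQsym, hpker k, inner_zero_right]
  have hbp : ∀ k, ⟪b k, p k⟫ = 0 := by
    intro k
    obtain ⟨z, hz⟩ := hbQ k
    rw [← hz, hQsym, hpker k, inner_zero_right]
  -- monotonicity consequence
  have hmono : ∀ k, ⟪b k, e k - d k⟫ ≤ ⟪Q (d k), e k - d k⟫ := by
    intro k
    have h0 := hA (x (k + 1)) xs (Q (x k) - B (x k) - Q (x (k + 1))) (-B xs)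
      (hiter k) hxs
    have harg : Q (x k) - B (x k) - Q (x (k + 1)) - -B xs = Q (d k) - b k := by
      rw [hd, hb]; simp only [map_sub]; abel
    have harg2 : x (k + 1) - xs = e k - d k := by show x (k + 1) - xs = (x k - xs) - (x k - x (k + 1)); abel
    rw [harg, harg2, inner_sub_left, sub_nonneg] at h0
    exact h0
  -- the key decrease estimate
  have hkey : ∀ k, (ν - β / 2) * ‖w k‖ ^ 2 ≤ V k - V (k + 1) := by
    intro k
    have hek1 : e (k + 1) = e k - d k := by show x (k + 1) - xs = (x k - xs) - (x k - x (k + 1)); abel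
    -- expand V k - V (k+1)
    have hsymc : ∀ u v : H, ⟪Q u, v⟫ = ⟪Q v, u⟫ := by
      intro u v; rw [hQsym, real_inner_comm]
    have hexp : V k - V (k + 1) = ⟪Q (d k), d k⟫ + 2 * ⟪Q (d k), e k - d k⟫ := by
      rw [hV]
      simp only [hek1, map_sub, inner_sub_left, inner_sub_right]
      rw [hsymc (e k) (d k)]
      ring
    -- lower bound for ⟪Q d, d⟫
    have hQdd : ν * ‖w k‖ ^ 2 ≤ ⟪Q (d k), d k⟫ := by
      have h1 : ⟪Q (d k), d k⟫ = ⟪Q (w k), w k⟫ := by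
        rw [hQdw k]
        rw [hdk k, inner_add_right, hip, add_zero]
      rw [h1]
      exact hcoer (w k) (hwK k)
    -- estimate of the cross terms
    have hbe : ‖b k‖ ^ 2 ≤ β * ⟪b k, e k⟫ := by
      exact hB (x k) xs
    have hbd : ⟪b k, d k⟫ ≤ ‖b k‖ * ‖w k‖ := by
      rw [hdk k, inner_add_right, hbp, add_zero]
      exact real_inner_le_norm _ _
    have hcross : -(β / 2) * ‖w k‖ ^ 2 ≤ 2 * ⟪b k, e k - d k⟫ := by
      rw [inner_sub_right]
      rcases eq_or_lt_of_le hβ with hβ0 | hβpos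
      · -- β = 0 : b k = 0
        have hb0 : b k = 0 := by
          have := hbe
          rw [← hβ0, zero_mul] at this
          have : ‖b k‖ = 0 := by nlinarith [norm_nonneg (b k)]
          exact norm_eq_zero.mp this
        rw [hb0]
        simp [← hβ0]
      · nlinarith [hbe, hbd, sq_nonneg (2 * ‖b k‖ - β * ‖w k‖), norm_nonneg (b k),
          norm_nonneg (w k)]
    have hcross2 : 2 * ⟪b k, e k - d k⟫ ≤ 2 * ⟪Q (d k), e k - d k⟫ := by
      have := hmono k
      linarith
    rw [hexp]
    nlinarith [hQdd, hcross, hcross2]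
  have hVnonneg : ∀ k, 0 ≤ V k := fun k => hQpos (e k)
  have hVanti : ∀ k, V (k + 1) ≤ V k := by
    intro k
    have := hkey k
    nlinarith [sq_nonneg ‖w k‖]
  -- V converges
  have hVtend : ∃ L : ℝ, Filter.Tendsto V Filter.atTop (nhds L) := by
    refine ⟨⨅ k, V k, tendsto_atTop_ciInf (antitone_nat_of_succ_le hVanti) ⟨0, ?_⟩⟩
    rintro _ ⟨k, rfl⟩
    exact hVnonneg k
  obtain ⟨L, hL⟩ := hVtend
  have hdiff : Filter.Tendsto (fun k => V k - V (k + 1)) Filter.atTop (nhds 0) := by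
    have h2 : Filter.Tendsto (fun k => V (k + 1)) Filter.atTop (nhds L) :=
      hL.comp (Filter.tendsto_add_atTop_nat 1)
    simpa using hL.sub h2
  -- ‖w k‖² → 0
  have hwsq : Filter.Tendsto (fun k => ‖w k‖ ^ 2) Filter.atTop (nhds 0) := by
    have hc : 0 < ν - β / 2 := by linarith
    apply squeeze_zero (fun k => sq_nonneg _) (g := fun k => (V k - V (k + 1)) / (ν - β / 2))
    · intro k
      rw [le_div_iff₀ hc]
      have := hkey k
      nlinarith [hkey k]
    · simpa using hdiff.div_const (ν - β / 2)
  have hwnorm : Filter.Tendsto (fun k => ‖w k‖) Filter.atTop (nhds 0) := by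
    have h2 := (Real.continuous_sqrt.tendsto 0).comp hwsq
    have h3 : (Real.sqrt ∘ fun k => ‖w k‖ ^ 2) = fun k => ‖w k‖ := by
      funext k
      simp [Function.comp, Real.sqrt_sq (norm_nonneg _)]
    rw [h3] at h2
    simpa using h2
  -- conclude
  refine squeeze_zero_norm (a := fun k => ‖Q‖ * ‖w k‖) (fun k => ?_) ?_
  · rw [hQdw k]
    exact Q.le_opNorm (w k)
  · simpa using hwnorm.const_mul ‖Q‖
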